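/- arXiv:math/0409114 — 2 statements merged into one kernel-verified Lean document; each statement's English description precedes it below -/
import Mathlib

section
/- Let I be a strongly stable monomial ideal of R = K[x_1,…,x_n], let 1 ≤ j ≤ n and t ≥ 1. Then x_j^t ∈ I if and only if the degree-t graded piece of R/(I + (x_{j+1},…,x_n)) is zero, and this holds if and only if every monomial of degree t in the variables x_1,…,x_j belongs to I. (This gives, for strongly stable I and s ≥ dim(R/I), the identity min{k : x_{n−s}^{k+1} ∈ I} = min{k : H(R/(I+(x_{n−s+1},…,x_n)), k+1) = 0} for the s-reduction number r_s(R/I).) -/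
open MvPolynomial

namespace Paper

variable {K : Type*} [Field K] {n : ℕ}

/-- `I` is a monomial ideal: together with any polynomial it contains all its monomials. -/
def IsMonomialIdeal (I : Ideal (MvPolynomial (Fin n) K)) : Prop :=
  ∀ f ∈ I, ∀ k ∈ f.support, (monomial k (1 : K)) ∈ I

/-- `I` is a strongly stable (Borel fixed) monomial ideal. -/
def StronglyStable (I : Ideal (MvPolynomial (Fin n) K)) : Prop :=
  IsMonomialIdeal I ∧
    ∀ k : Fin n →₀ ℕ, (monomial k (1 : K)) ∈ I →
      ∀ i j : Fin n, j < i → k i ≠ 0 →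
        (monomial (k + Finsupp.single j 1 - Finsupp.single i 1) (1 : K)) ∈ I

/-- The monomial with exponent vector `k` is a minimal generator of the monomial ideal `I`. -/
def IsMinGen (I : Ideal (MvPolynomial (Fin n) K)) (k : Fin n →₀ ℕ) : Prop :=
  (monomial k (1 : K)) ∈ I ∧
    ∀ i : Fin n, k i ≠ 0 → (monomial (k - Finsupp.single i 1) (1 : K)) ∉ I

/-- The total degree of an exponent vector. -/
def expDeg (k : Fin n →₀ ℕ) : ℕ := k.sum fun _ e => e

/-- The smallest (1-based) index of a variable occurring in the monomial `x^k`. -/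
noncomputable def minIdx (k : Fin n →₀ ℕ) : ℕ :=
  sInf {v : ℕ | ∃ i : Fin n, k i ≠ 0 ∧ v = (i : ℕ) + 1}

/-- The largest (1-based) index of a variable occurring in the monomial `x^k`. -/
noncomputable def maxIdx (k : Fin n →₀ ℕ) : ℕ :=
  sSup {v : ℕ | ∃ i : Fin n, k i ≠ 0 ∧ v = (i : ℕ) + 1}

/-- `D(I)`: the maximum of `min(m)` over minimal generators `m` of `I`. -/
noncomputable def DD (I : Ideal (MvPolynomial (Fin n) K)) : ℕ :=
  sSup {v : ℕ | ∃ k : Fin n →₀ ℕ, IsMinGen I k ∧ v = minIdx k}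

/-- `M(I)`: the maximum of `max(m)` over minimal generators `m` of `I`. -/
noncomputable def MM (I : Ideal (MvPolynomial (Fin n) K)) : ℕ :=
  sSup {v : ℕ | ∃ k : Fin n →₀ ℕ, IsMinGen I k ∧ v = maxIdx k}

/-- The Hilbert function of `R/I` in (integer) degree `t`:
the `K`-dimension of the degree-`t` graded piece of `R/I`. -/
noncomputable def HF (I : Ideal (MvPolynomial (Fin n) K)) (t : ℤ) : ℕ :=
  if 0 ≤ t then
    Module.finrank K (homogeneousSubmodule (Fin n) K t.toNat) -
      Module.finrank K
        ((homogeneousSubmodule (Fin n) K t.toNat ⊓ Submodule.restrictScalars K I :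
          Submodule K (MvPolynomial (Fin n) K)))
  else 0

/-- The first difference `ΔH(R/I,t) = H(R/I,t) - H(R/I,t-1)` of the Hilbert function. -/
noncomputable def dH (I : Ideal (MvPolynomial (Fin n) K)) (t : ℤ) : ℤ :=
  (HF I t : ℤ) - HF I (t - 1)

/-- The second difference of the Hilbert function. -/
noncomputable def d2H (I : Ideal (MvPolynomial (Fin n) K)) (t : ℤ) : ℤ :=
  dH I t - dH I (t - 1)

/-- The irrelevant maximal ideal `(x_1, …, x_n)`. -/
noncomputable def irrel (n : ℕ) (K : Type*) [Field K] : Ideal (MvPolynomial (Fin n) K) :=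
  Ideal.span (Set.range X)

/-- `I` is saturated: `(I : (x_1,…,x_n)) = I`. -/
def IsSaturatedIdeal (I : Ideal (MvPolynomial (Fin n) K)) : Prop :=
  Submodule.colon I (irrel n K) = I

/-- The saturation `I^sat = ⋃ₖ (I : (x_1,…,x_n)^k)`. -/
noncomputable def saturation (I : Ideal (MvPolynomial (Fin n) K)) :
    Ideal (MvPolynomial (Fin n) K) :=
  ⨆ k : ℕ, Submodule.colon I (((irrel n K) ^ k : Ideal (MvPolynomial (Fin n) K)) : Set (MvPolynomial (Fin n) K))

/-- `I` is a homogeneous ideal: it contains all homogeneous components of its elements. -/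
def IsHomogeneousIdeal (I : Ideal (MvPolynomial (Fin n) K)) : Prop :=
  ∀ f ∈ I, ∀ i : ℕ, homogeneousComponent i f ∈ I

/-- `⟨I_{≤ d}⟩`: the ideal generated by the homogeneous elements of `I` of degree at most `d`. -/
noncomputable def idealLE (I : Ideal (MvPolynomial (Fin n) K)) (d : ℕ) : Ideal (MvPolynomial (Fin n) K) :=
  Ideal.span {f | f ∈ I ∧ ∃ e : ℕ, e ≤ d ∧ f.IsHomogeneous e}

/-- The initial degree of `I`: the least `t` with `I_t ≠ 0`. -/
noncomputable def initDeg (I : Ideal (MvPolynomial (Fin n) K)) : ℕ :=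
  sInf {t : ℕ | ∃ f ∈ I, f ≠ 0 ∧ f.IsHomogeneous t}

/-- First difference operator for integer-indexed functions. -/
def diffFun (f : ℤ → ℤ) : ℤ → ℤ := fun t => f t - f (t - 1)

/-- The depth of `R/I` with respect to the irrelevant maximal ideal: the maximal length of an
`R/I`-regular sequence of homogeneous elements of positive degree. -/
noncomputable def homDepth (I : Ideal (MvPolynomial (Fin n) K)) : ℕ :=
  sSup {k : ℕ | ∃ rs : List (MvPolynomial (Fin n) K), rs.length = k ∧
    (∀ r ∈ rs, ∃ e : ℕ, 0 < e ∧ r.IsHomogeneous e) ∧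
    RingTheory.Sequence.IsRegular (MvPolynomial (Fin n) K ⧸ I) rs}

/-- The affine cone over a set of points of projective space `ℙ^{n-1}`. -/
def cone (Z : Set (Projectivization K (Fin n → K))) : Set (Fin n → K) :=
  {v | v = 0 ∨ ∃ hv : v ≠ 0, Projectivization.mk K v hv ∈ Z}

/-- The homogeneous vanishing ideal of a set of points of projective space:
all polynomials vanishing on the affine cone. -/
def vIdeal (Z : Set (Projectivization K (Fin n → K))) : Ideal (MvPolynomial (Fin n) K) where
  carrier := {f | ∀ v ∈ cone Z, eval v f = 0}
  add_mem' := by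
    intro a b ha hb v hv
    simp [map_add, ha v hv, hb v hv]
  zero_mem' := by
    intro v hv
    simp
  smul_mem' := by
    intro c f hf v hv
    simp [smul_eq_mul, hf v hv]

/-- The Uniform Position Property: any two subsets of the same cardinality have the same
Hilbert function. -/
def UPP (Z : Finset (Projectivization K (Fin n → K))) : Prop :=
  ∀ A B : Finset (Projectivization K (Fin n → K)), A ⊆ Z → B ⊆ Z → A.card = B.card →
    ∀ t : ℤ, HF (vIdeal (A : Set (Projectivization K (Fin n → K)))) t =
      HF (vIdeal (B : Set (Projectivization K (Fin n → K)))) t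

/-- `g₂(I,t)`: the minimum over pairs of linear forms `(L₁,L₂)` of
`dim_K (R/(I + (L₁,L₂)))_t` (the value attained by a generic pair). -/
noncomputable def g2 (I : Ideal (MvPolynomial (Fin n) K)) (t : ℤ) : ℕ :=
  sInf {v : ℕ | ∃ L₁ L₂ : MvPolynomial (Fin n) K, L₁.IsHomogeneous 1 ∧ L₂.IsHomogeneous 1 ∧
    v = HF (I ⊔ Ideal.span {L₁, L₂}) t}

/-- The Artinian reduction of `R/I` has the Weak Lefschetz Property. -/
def WLP (I : Ideal (MvPolynomial (Fin n) K)) : Prop :=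
  ∃ L₁ L₂ : MvPolynomial (Fin n) K, L₁.IsHomogeneous 1 ∧ L₂.IsHomogeneous 1 ∧
    (∀ g, L₁ * g ∈ I → g ∈ I) ∧
    ∀ t : ℕ,
      (∀ f : MvPolynomial (Fin n) K, f.IsHomogeneous t →
        L₂ * f ∈ I ⊔ Ideal.span {L₁} → f ∈ I ⊔ Ideal.span {L₁}) ∨
      (∀ g : MvPolynomial (Fin n) K, g.IsHomogeneous (t + 1) →
        ∃ f : MvPolynomial (Fin n) K, f.IsHomogeneous t ∧ g - L₂ * f ∈ I ⊔ Ideal.span {L₁})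

lemma expDeg_eq_sum_univ (k : Fin n →₀ ℕ) : expDeg k = ∑ i, k i := by
  rw [expDeg, Finsupp.sum_fintype]; intro i; rfl

lemma expDeg_eq_degree (k : Fin n →₀ ℕ) : expDeg k = k.degree := rfl

lemma expDeg_add (a b : Fin n →₀ ℕ) : expDeg (a + b) = expDeg a + expDeg b := by
  simp [expDeg_eq_sum_univ, Finset.sum_add_distrib]

lemma expDeg_single (i : Fin n) (c : ℕ) : expDeg (Finsupp.single i c) = c := by
  rw [expDeg, Finsupp.sum_single_index]; rfl

lemma descent {I : Ideal (MvPolynomial (Fin n) K)} (hSS : StronglyStable I) {j : Fin n} {t : ℕ}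
    (hx : (monomial (Finsupp.single j t) (1 : K)) ∈ I) :
    ∀ (m : ℕ) (k : Fin n →₀ ℕ), t - k j = m → expDeg k = t → (∀ i ∈ k.support, i ≤ j) →
      monomial k (1 : K) ∈ I := by
  intro m
  induction m with
  | zero =>
    intro k hm hdeg hsupp
    have hle : k j ≤ t := by
      rw [← hdeg, expDeg_eq_sum_univ]
      exact Finset.single_le_sum (fun _ _ => Nat.zero_le _) (Finset.mem_univ j)
    have hkj : k j = t := by omega
    have hk : k = Finsupp.single j t := by
      ext i
      by_cases h : i = j
      · subst h; simp [hkj]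
      · rw [Finsupp.single_apply, if_neg (Ne.symm h)]
        by_contra hne
        have hpair : k i + k j ≤ ∑ a, k a := by
          rw [← Finset.sum_pair h]
          exact Finset.sum_le_sum_of_subset (Finset.subset_univ _)
        rw [← expDeg_eq_sum_univ, hdeg] at hpair
        omega
    rw [hk]; exact hx
  | succ m ih =>
    intro k hm hdeg hsupp
    have hle : k j ≤ t := by
      rw [← hdeg, expDeg_eq_sum_univ]
      exact Finset.single_le_sum (fun _ _ => Nat.zero_le _) (Finset.mem_univ j)
    have hjt : k j < t := by omega
    have hex : ∃ i, i ≠ j ∧ k i ≠ 0 := by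
      by_contra h
      push_neg at h
      have : ∑ a, k a = k j := Finset.sum_eq_single j (fun b _ hb => h b hb) (by simp)
      rw [← expDeg_eq_sum_univ, hdeg] at this
      omega
    obtain ⟨i, hij, hki⟩ := hex
    have hilt : i < j := lt_of_le_of_ne (hsupp i (Finsupp.mem_support_iff.2 hki)) hij
    set k' := k + Finsupp.single j 1 - Finsupp.single i 1 with hk'
    have hkey : k' + Finsupp.single i 1 = k + Finsupp.single j 1 := by
      apply tsub_add_cancel_of_le
      rw [Finsupp.single_le_iff, Finsupp.add_apply, Finsupp.single_apply, if_neg hij.symm]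
      omega
    have hk'j : k' j = k j + 1 := by
      have := DFunLike.congr_fun hkey j
      simp only [Finsupp.add_apply] at this
      rw [Finsupp.single_apply, if_neg hij, Finsupp.single_apply, if_pos rfl] at this
      omega
    have hdeg' : expDeg k' = t := by
      have := congrArg expDeg hkey
      rw [expDeg_add, expDeg_add, expDeg_single, expDeg_single, hdeg] at this
      omega
    have hsupp' : ∀ a ∈ k'.support, a ≤ j := by
      intro a ha
      rw [Finsupp.mem_support_iff] at ha
      rw [hk', Finsupp.tsub_apply, Finsupp.add_apply] at ha
      by_cases haj : a = j
      · exact haj.le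
      · rw [Finsupp.single_apply, if_neg (Ne.symm haj)] at ha
        have hka : k a ≠ 0 := by omega
        exact hsupp a (Finsupp.mem_support_iff.2 hka)
    have hmem' : monomial k' (1 : K) ∈ I := ih k' (by omega) hdeg' hsupp'
    have := hSS.2 k' hmem' j i hilt (by omega)
    rwa [hkey, add_tsub_cancel_right] at this

noncomputable def phi (j : Fin n) : MvPolynomial (Fin n) K →ₐ[K] MvPolynomial (Fin n) K :=
  aeval (fun i : Fin n => if i ≤ j then (X i : MvPolynomial (Fin n) K) else 0)

lemma phi_monomial_of_le (j : Fin n) (k : Fin n →₀ ℕ) (c : K)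
    (h : ∀ i ∈ k.support, i ≤ j) : phi j (monomial k c) = monomial k c := by
  rw [phi, aeval_monomial, monomial_eq]
  congr 1
  rw [Finsupp.prod, Finsupp.prod]
  exact Finset.prod_congr rfl fun i hi => by rw [if_pos (h i hi)]

lemma phi_monomial_of_not (j : Fin n) (k : Fin n →₀ ℕ) (c : K)
    (i : Fin n) (hi : i ∈ k.support) (hij : ¬ i ≤ j) : phi j (monomial k c) = 0 := by
  rw [phi, aeval_monomial, Finsupp.prod]
  rw [Finset.prod_eq_zero hi (by rw [if_neg hij]; exact zero_pow (Finsupp.mem_support_iff.1 hi)),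
    mul_zero]

lemma phi_mem {I : Ideal (MvPolynomial (Fin n) K)}
    (hMon : ∀ f ∈ I, ∀ k ∈ f.support, (monomial k (1 : K)) ∈ I)
    (j : Fin n) {g : MvPolynomial (Fin n) K} (hg : g ∈ I) : phi j g ∈ I := by
  rw [show phi j g = ∑ v ∈ g.support, phi j (monomial v (coeff v g)) by
    conv_lhs => rw [as_sum g]
    rw [map_sum]]
  apply Submodule.sum_mem
  intro k hk
  by_cases h : ∀ i ∈ k.support, i ≤ j
  · rw [phi_monomial_of_le j k _ h]
    have : monomial k (coeff k g) = C (coeff k g) * monomial k (1 : K) := by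
      rw [C_mul_monomial, mul_one]
    rw [this]
    exact Ideal.mul_mem_left _ _ (hMon g hg k hk)
  · push_neg at h
    obtain ⟨i, hi, hij⟩ := h
    rw [phi_monomial_of_not j k _ i hi (not_le.2 hij)]
    exact zero_mem _

theorem pow_mem_iff_piece_eq_zero {K : Type*} [Field K] {n : ℕ}
    (I : Ideal (MvPolynomial (Fin n) K)) (hSS : StronglyStable I)
    (j : Fin n) (t : ℕ) (ht : 1 ≤ t) :
    ((X j : MvPolynomial (Fin n) K) ^ t ∈ I ↔
      ∀ f : MvPolynomial (Fin n) K, f.IsHomogeneous t →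
        f ∈ I ⊔ Ideal.span {g : MvPolynomial (Fin n) K | ∃ i : Fin n, j < i ∧ g = X i}) ∧
    ((X j : MvPolynomial (Fin n) K) ^ t ∈ I ↔
      ∀ k : Fin n →₀ ℕ, expDeg k = t → (∀ i ∈ k.support, i ≤ j) →
        (MvPolynomial.monomial k (1 : K)) ∈ I) := by
  have hxmon : (X j : MvPolynomial (Fin n) K) ^ t = monomial (Finsupp.single j t) (1 : K) :=
    X_pow_eq_monomial
  have main2 : (X j : MvPolynomial (Fin n) K) ^ t ∈ I ↔
      ∀ k : Fin n →₀ ℕ, expDeg k = t → (∀ i ∈ k.support, i ≤ j) →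
        (monomial k (1 : K)) ∈ I := by
    constructor
    · intro hpow k hdeg hsupp
      rw [hxmon] at hpow
      exact descent hSS hpow (t - k j) k rfl hdeg hsupp
    · intro h
      rw [hxmon]
      refine h (Finsupp.single j t) (expDeg_single j t) ?_
      intro i hi
      have := Finsupp.support_single_subset hi
      rw [Finset.mem_singleton] at this
      exact this.le
  refine ⟨⟨?_, ?_⟩, main2⟩
  · intro hpow f hf
    rw [show f = ∑ v ∈ f.support, monomial v (coeff v f) from as_sum f]
    apply Submodule.sum_mem
    intro k hk
    by_cases hsup : ∀ i ∈ k.support, i ≤ j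
    · apply Ideal.mem_sup_left
      have hdeg : expDeg k = t := by
        rw [expDeg_eq_degree, Finsupp.degree_eq_weight_one]
        exact hf (MvPolynomial.mem_support_iff.1 hk)
      have hmem := main2.1 hpow k hdeg hsup
      rw [show monomial k (coeff k f) = C (coeff k f) * monomial k (1 : K) by
        rw [C_mul_monomial, mul_one]]
      exact Ideal.mul_mem_left _ _ hmem
    · push_neg at hsup
      obtain ⟨i, hi, hij⟩ := hsup
      apply Ideal.mem_sup_right
      have hXi : (X i : MvPolynomial (Fin n) K) ∈
          Ideal.span {g : MvPolynomial (Fin n) K | ∃ i' : Fin n, j < i' ∧ g = X i'} :=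
        Ideal.subset_span ⟨i, hij, rfl⟩
      have hXim : (X i : MvPolynomial (Fin n) K) = monomial (Finsupp.single i 1) 1 := by
        rw [← X_pow_eq_monomial, pow_one]
      have hfac : monomial k (coeff k f) =
          monomial (k - Finsupp.single i 1) (coeff k f) * X i := by
        rw [hXim, monomial_mul, mul_one, tsub_add_cancel_of_le]
        rw [Finsupp.single_le_iff]
        exact Nat.one_le_iff_ne_zero.2 (Finsupp.mem_support_iff.1 hi)
      rw [hfac]
      exact Ideal.mul_mem_left _ _ hXi
  · intro h
    have hX : ((X j : MvPolynomial (Fin n) K) ^ t).IsHomogeneous t := by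
      have := (isHomogeneous_X K j).pow t
      rwa [one_mul] at this
    obtain ⟨a, ha, b, hb, hab⟩ := Submodule.mem_sup.1 (h _ hX)
    have hφa : phi j a ∈ I := phi_mem hSS.1 j ha
    have hφb : phi j b = 0 := by
      have hker : Ideal.span {g : MvPolynomial (Fin n) K | ∃ i : Fin n, j < i ∧ g = X i} ≤
          RingHom.ker (phi (K := K) j).toRingHom := by
        rw [Ideal.span_le]
        rintro g ⟨i, hij, rfl⟩
        rw [SetLike.mem_coe, RingHom.mem_ker]
        show phi j (X i) = 0
        rw [phi, aeval_X, if_neg (not_le.2 hij)]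
      exact hker hb
    have hφpow : phi j ((X j : MvPolynomial (Fin n) K) ^ t) = X j ^ t := by
      rw [map_pow, phi, aeval_X, if_pos le_rfl]
    have : (X j : MvPolynomial (Fin n) K) ^ t = phi j a := by
      rw [← hφpow, ← hab, map_add, hφb, add_zero]
    rw [this]
    exact hφa


end Paper
end

section
/- Let I be a saturated homogeneous ideal of R = K[x_1,…,x_n] (n ≥ 3, char K = 0) such that the Krull dimension of R/I is at most 2 (so I defines a subscheme of ℙ^{n−1} of dimension ≤ 1). Let d be an integer and suppose there exist linear forms L₁, L₂ such that L₁ is a nonzerodivisor on R/I and (R/(I + (L₁,L₂)))_{d+1} = 0 (i.e., d ≥ r₂(R/I)). Then ΔH(R/I,d) ≥ ΔH(R/I,d+1). -/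
open MvPolynomial

namespace Paper

variable {K : Type*} [Field K] {n : ℕ}

/-! ### Auxiliary material for Statement 8 -/

section Aux

instance homSub_fd (t : ℕ) : FiniteDimensional K (homogeneousSubmodule (Fin n) K t) :=
  Submodule.finiteDimensional_of_le (S₂ := restrictTotalDegree (Fin n) K t)
    (fun p hp => (mem_restrictTotalDegree _ _ _).2
      ((mem_homogeneousSubmodule _ _).1 hp).totalDegree_le)

lemma hc_mul_succ {L : MvPolynomial (Fin n) K} (hL : L.IsHomogeneous 1)
    (g : MvPolynomial (Fin n) K) (t : ℕ) :
    homogeneousComponent (t + 1) (L * g) = L * homogeneousComponent t g := by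
  have key : ∀ i : ℕ, homogeneousComponent (t + 1) (L * homogeneousComponent i g)
      = if t + 1 = i + 1 then L * homogeneousComponent i g else 0 := fun i =>
    homogeneousComponent_of_mem ((mem_homogeneousSubmodule _ _).2
      (by simpa [mul_comm, Nat.add_comm] using
        (homogeneousComponent_isHomogeneous i g).mul hL))
  conv_lhs => rw [← sum_homogeneousComponent g, Finset.mul_sum, map_sum]
  rw [Finset.sum_eq_single t (fun b _ hb => by rw [key b, if_neg (by omega)])
    (fun ht => by rw [homogeneousComponent_eq_zero t g (by simpa using ht),
      mul_zero, map_zero]), key t, if_pos rfl]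

lemma hc_mul_zero {L : MvPolynomial (Fin n) K} (hL : L.IsHomogeneous 1)
    (g : MvPolynomial (Fin n) K) :
    homogeneousComponent 0 (L * g) = 0 := by
  have key : ∀ i : ℕ, homogeneousComponent 0 (L * homogeneousComponent i g) = 0 := fun i => by
    rw [homogeneousComponent_of_mem ((mem_homogeneousSubmodule _ _).2
      (by simpa [mul_comm, Nat.add_comm] using
        (homogeneousComponent_isHomogeneous i g).mul hL)), if_neg (by omega)]
  conv_lhs => rw [← sum_homogeneousComponent g, Finset.mul_sum, map_sum]
  exact Finset.sum_eq_zero fun i _ => key i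

/-- Homogeneous components stay in `Jid ⊔ (L)` when `Jid` is componentwise closed. -/
lemma hc_sup_mem {Jid : Ideal (MvPolynomial (Fin n) K)}
    (hJ : ∀ f ∈ Jid, ∀ m : ℕ, homogeneousComponent m f ∈ Jid)
    {L : MvPolynomial (Fin n) K} (hL : L.IsHomogeneous 1) :
    ∀ f ∈ Jid ⊔ Ideal.span {L}, ∀ m : ℕ,
      homogeneousComponent m f ∈ Jid ⊔ Ideal.span {L} := by
  intro f hf m
  obtain ⟨i, hi, z, hz, rfl⟩ := Submodule.mem_sup.1 hf
  obtain ⟨g, rfl⟩ := Ideal.mem_span_singleton'.1 hz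
  rw [map_add]
  refine add_mem (Ideal.mem_sup_left (hJ i hi m)) ?_
  rw [mul_comm g L]
  cases m with
  | zero => rw [hc_mul_zero hL]; exact zero_mem _
  | succ k =>
      rw [hc_mul_succ hL]
      exact Ideal.mem_sup_right (Ideal.mem_span_singleton'.2
        ⟨homogeneousComponent k g, mul_comm _ _⟩)

/-- Decomposition of a homogeneous element of `Jid ⊔ (L)` in positive degree. -/
lemma decomp_succ {Jid : Ideal (MvPolynomial (Fin n) K)}
    (hJ : ∀ f ∈ Jid, ∀ m : ℕ, homogeneousComponent m f ∈ Jid)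
    {L : MvPolynomial (Fin n) K} (hL : L.IsHomogeneous 1) {t : ℕ}
    {f : MvPolynomial (Fin n) K}
    (hf : f ∈ homogeneousSubmodule (Fin n) K (t + 1))
    (hfJ : f ∈ Jid ⊔ Ideal.span {L}) :
    ∃ h ∈ homogeneousSubmodule (Fin n) K t, f - L * h ∈ Jid := by
  obtain ⟨i, hi, z, hz, rfl⟩ := Submodule.mem_sup.1 hfJ
  obtain ⟨g, rfl⟩ := Ideal.mem_span_singleton'.1 hz
  refine ⟨homogeneousComponent t g, homogeneousComponent_mem t g, ?_⟩
  have e2 : homogeneousComponent (t + 1) (i + g * L) = i + g * L :=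
    (homogeneousComponent_of_mem hf).trans (if_pos rfl)
  have e : i + g * L - L * homogeneousComponent t g = homogeneousComponent (t + 1) i := by
    rw [← e2, map_add, mul_comm g L, hc_mul_succ hL]; ring
  rw [e]; exact hJ i hi (t + 1)

/-- Degree-zero elements of `Jid ⊔ (L)` are in `Jid`. -/
lemma decomp_zero {Jid : Ideal (MvPolynomial (Fin n) K)}
    (hJ : ∀ f ∈ Jid, ∀ m : ℕ, homogeneousComponent m f ∈ Jid)
    {L : MvPolynomial (Fin n) K} (hL : L.IsHomogeneous 1)
    {f : MvPolynomial (Fin n) K}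
    (hf : f ∈ homogeneousSubmodule (Fin n) K 0)
    (hfJ : f ∈ Jid ⊔ Ideal.span {L}) : f ∈ Jid := by
  obtain ⟨i, hi, z, hz, rfl⟩ := Submodule.mem_sup.1 hfJ
  obtain ⟨g, rfl⟩ := Ideal.mem_span_singleton'.1 hz
  have e2 : homogeneousComponent 0 (i + g * L) = i + g * L :=
    (homogeneousComponent_of_mem hf).trans (if_pos rfl)
  have e : i + g * L = homogeneousComponent 0 i := by
    rw [← e2, map_add, mul_comm g L, hc_mul_zero hL, add_zero]
  rw [e]; exact hJ i hi 0

/-- Multiplication by a nonzero linear form `L₁` regular on `R/I`: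
dimension count relating `I` and `J = I ⊔ (L₁)` in consecutive degrees. -/
lemma step_eq {I : Ideal (MvPolynomial (Fin n) K)} (hhom : IsHomogeneousIdeal I)
    {L₁ : MvPolynomial (Fin n) K} (hL₁ : L₁.IsHomogeneous 1) (hL₁0 : L₁ ≠ 0)
    (hreg : ∀ g : MvPolynomial (Fin n) K, L₁ * g ∈ I → g ∈ I) (t : ℕ) :
    Module.finrank K (homogeneousSubmodule (Fin n) K (t + 1) ⊓
        Submodule.restrictScalars K (I ⊔ Ideal.span {L₁}) :
        Submodule K (MvPolynomial (Fin n) K))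
      + Module.finrank K (homogeneousSubmodule (Fin n) K t ⊓ Submodule.restrictScalars K I :
        Submodule K (MvPolynomial (Fin n) K))
    = Module.finrank K (homogeneousSubmodule (Fin n) K (t + 1) ⊓ Submodule.restrictScalars K I :
        Submodule K (MvPolynomial (Fin n) K))
      + Module.finrank K (homogeneousSubmodule (Fin n) K t) := by
  classical
  set μ : MvPolynomial (Fin n) K →ₗ[K] MvPolynomial (Fin n) K := LinearMap.mulLeft K L₁ with hμ
  have hinj : Function.Injective μ := fun a b h =>
    mul_left_cancel₀ hL₁0 (by simpa [hμ, LinearMap.mulLeft_apply] using h)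
  set M : Submodule K (MvPolynomial (Fin n) K) := ((homogeneousSubmodule (Fin n) K t)).map μ with hM
  have hMle : M ≤ (homogeneousSubmodule (Fin n) K (t + 1)) := by
    rintro x ⟨h, hh, rfl⟩
    exact (mem_homogeneousSubmodule _ _).2
      (by rw [hμ, LinearMap.mulLeft_apply, mul_comm]
          exact ((mem_homogeneousSubmodule _ _).1 hh).mul hL₁)
  haveI : FiniteDimensional K M := Submodule.finiteDimensional_of_le hMle
  haveI : FiniteDimensional K
      ((homogeneousSubmodule (Fin n) K (t + 1)) ⊓ Submodule.restrictScalars K I : Submodule K (MvPolynomial (Fin n) K)) :=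
    Submodule.finiteDimensional_of_le inf_le_left
  have claim1 : (homogeneousSubmodule (Fin n) K (t + 1)) ⊓ Submodule.restrictScalars K (I ⊔ Ideal.span {L₁})
      = ((homogeneousSubmodule (Fin n) K (t + 1)) ⊓ Submodule.restrictScalars K I) ⊔ M := by
    apply le_antisymm
    · rintro f ⟨hf1, hf2⟩
      obtain ⟨h, hh, hfh⟩ := decomp_succ hhom hL₁ hf1 hf2
      have hLh : L₁ * h ∈ (homogeneousSubmodule (Fin n) K (t + 1)) := (mem_homogeneousSubmodule _ _).2
        (by rw [mul_comm]; exact ((mem_homogeneousSubmodule _ _).1 hh).mul hL₁)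
      exact Submodule.mem_sup.2 ⟨f - L₁ * h, ⟨sub_mem hf1 hLh, hfh⟩,
        L₁ * h, ⟨h, hh, rfl⟩, by ring⟩
    · refine sup_le (le_inf inf_le_left (fun x hx => Ideal.mem_sup_left hx.2)) ?_
      refine le_inf hMle ?_
      rintro x ⟨h, hh, rfl⟩
      exact Ideal.mul_mem_right h _ (Ideal.mem_sup_right (Ideal.mem_span_singleton_self L₁))
  have claim2 : ((homogeneousSubmodule (Fin n) K (t + 1)) ⊓ Submodule.restrictScalars K I) ⊓ M
      = ((homogeneousSubmodule (Fin n) K t) ⊓ Submodule.restrictScalars K I).map μ := by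
    apply le_antisymm
    · rintro x ⟨⟨hx1, hx2⟩, h, hh, rfl⟩
      exact ⟨h, ⟨hh, hreg h hx2⟩, rfl⟩
    · rintro x ⟨h, ⟨hh1, hh2⟩, rfl⟩
      refine ⟨⟨hMle ⟨h, hh1, rfl⟩, ?_⟩, h, hh1, rfl⟩
      exact Ideal.mul_mem_left I L₁ hh2
  have hdim := Submodule.finrank_sup_add_finrank_inf_eq
    ((homogeneousSubmodule (Fin n) K (t + 1)) ⊓ Submodule.restrictScalars K I) M
  rw [claim2] at hdim
  have e1 : Module.finrank K ((homogeneousSubmodule (Fin n) K t)) = Module.finrank K M :=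
    (Submodule.equivMapOfInjective μ hinj ((homogeneousSubmodule (Fin n) K t))).finrank_eq
  have e2 : Module.finrank K ((homogeneousSubmodule (Fin n) K t) ⊓ Submodule.restrictScalars K I :
      Submodule K (MvPolynomial (Fin n) K))
      = Module.finrank K (((homogeneousSubmodule (Fin n) K t) ⊓ Submodule.restrictScalars K I).map μ) :=
    (Submodule.equivMapOfInjective μ hinj _).finrank_eq
  rw [claim1, e2, e1]
  omega

/-- Degree zero: `J` and `I` agree. -/
lemma step_zero {I : Ideal (MvPolynomial (Fin n) K)} (hhom : IsHomogeneousIdeal I)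
    {L₁ : MvPolynomial (Fin n) K} (hL₁ : L₁.IsHomogeneous 1) :
    (homogeneousSubmodule (Fin n) K 0 ⊓
        Submodule.restrictScalars K (I ⊔ Ideal.span {L₁}) :
        Submodule K (MvPolynomial (Fin n) K))
      = homogeneousSubmodule (Fin n) K 0 ⊓ Submodule.restrictScalars K I := by
  apply le_antisymm
  · rintro f ⟨hf1, hf2⟩
    exact ⟨hf1, decomp_zero hhom hL₁ hf1 hf2⟩
  · exact fun x hx => ⟨hx.1, Ideal.mem_sup_left hx.2⟩

/-- Surjectivity of multiplication by `L₂` in a range where the further quotient vanishes. -/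
lemma step_le {Jid : Ideal (MvPolynomial (Fin n) K)}
    (hJ : ∀ f ∈ Jid, ∀ m : ℕ, homogeneousComponent m f ∈ Jid)
    {L₂ : MvPolynomial (Fin n) K} (hL₂ : L₂.IsHomogeneous 1) (t : ℕ)
    (hfull : ∀ f ∈ homogeneousSubmodule (Fin n) K (t + 1), f ∈ Jid ⊔ Ideal.span {L₂}) :
    Module.finrank K (homogeneousSubmodule (Fin n) K (t + 1))
      + Module.finrank K (homogeneousSubmodule (Fin n) K t ⊓ Submodule.restrictScalars K Jid :
        Submodule K (MvPolynomial (Fin n) K))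
    ≤ Module.finrank K (homogeneousSubmodule (Fin n) K t)
      + Module.finrank K (homogeneousSubmodule (Fin n) K (t + 1) ⊓
        Submodule.restrictScalars K Jid : Submodule K (MvPolynomial (Fin n) K)) := by
  classical
  haveI : ∀ k, FiniteDimensional K
      ((homogeneousSubmodule (Fin n) K k) ⊓ Submodule.restrictScalars K Jid : Submodule K (MvPolynomial (Fin n) K)) :=
    fun k => Submodule.finiteDimensional_of_le inf_le_left
  by_cases hL₂0 : L₂ = 0
  · subst hL₂0
    have hfull' : (homogeneousSubmodule (Fin n) K (t + 1)) ≤ Submodule.restrictScalars K Jid := by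
      intro f hf
      have h := hfull f hf
      rwa [Ideal.span_singleton_eq_bot.mpr rfl, sup_bot_eq] at h
    have e : (homogeneousSubmodule (Fin n) K (t + 1)) ⊓ Submodule.restrictScalars K Jid = (homogeneousSubmodule (Fin n) K (t + 1)) :=
      inf_eq_left.2 hfull'
    rw [e]
    have := Submodule.finrank_mono
      (inf_le_left : (homogeneousSubmodule (Fin n) K t) ⊓ Submodule.restrictScalars K Jid ≤ (homogeneousSubmodule (Fin n) K t))
    omega
  set ν : MvPolynomial (Fin n) K →ₗ[K] MvPolynomial (Fin n) K := LinearMap.mulLeft K L₂ with hν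
  have hinj : Function.Injective ν := fun a b h =>
    mul_left_cancel₀ hL₂0 (by simpa [hν, LinearMap.mulLeft_apply] using h)
  set M : Submodule K (MvPolynomial (Fin n) K) := ((homogeneousSubmodule (Fin n) K t)).map ν with hM
  have hMle : M ≤ (homogeneousSubmodule (Fin n) K (t + 1)) := by
    rintro x ⟨h, hh, rfl⟩
    exact (mem_homogeneousSubmodule _ _).2
      (by rw [hν, LinearMap.mulLeft_apply, mul_comm]
          exact ((mem_homogeneousSubmodule _ _).1 hh).mul hL₂)
  haveI : FiniteDimensional K M := Submodule.finiteDimensional_of_le hMle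
  have claim1 : (homogeneousSubmodule (Fin n) K (t + 1)) = ((homogeneousSubmodule (Fin n) K (t + 1)) ⊓ Submodule.restrictScalars K Jid) ⊔ M := by
    apply le_antisymm
    · intro f hf
      obtain ⟨h, hh, hfh⟩ := decomp_succ hJ hL₂ hf (hfull f hf)
      have hLh : L₂ * h ∈ (homogeneousSubmodule (Fin n) K (t + 1)) := (mem_homogeneousSubmodule _ _).2
        (by rw [mul_comm]; exact ((mem_homogeneousSubmodule _ _).1 hh).mul hL₂)
      exact Submodule.mem_sup.2 ⟨f - L₂ * h, ⟨sub_mem hf hLh, hfh⟩,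
        L₂ * h, ⟨h, hh, rfl⟩, by ring⟩
    · exact sup_le inf_le_left hMle
  have claim2 : ((homogeneousSubmodule (Fin n) K t) ⊓ Submodule.restrictScalars K Jid).map ν
      ≤ ((homogeneousSubmodule (Fin n) K (t + 1)) ⊓ Submodule.restrictScalars K Jid) ⊓ M := by
    rintro x ⟨h, ⟨hh1, hh2⟩, rfl⟩
    exact ⟨⟨hMle ⟨h, hh1, rfl⟩, Ideal.mul_mem_left Jid L₂ hh2⟩, h, hh1, rfl⟩
  have hdim := Submodule.finrank_sup_add_finrank_inf_eq
    ((homogeneousSubmodule (Fin n) K (t + 1)) ⊓ Submodule.restrictScalars K Jid) M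
  rw [← claim1] at hdim
  have e1 : Module.finrank K ((homogeneousSubmodule (Fin n) K t)) = Module.finrank K M :=
    (Submodule.equivMapOfInjective ν hinj ((homogeneousSubmodule (Fin n) K t))).finrank_eq
  have e2 : Module.finrank K ((homogeneousSubmodule (Fin n) K t) ⊓ Submodule.restrictScalars K Jid :
      Submodule K (MvPolynomial (Fin n) K))
      = Module.finrank K (((homogeneousSubmodule (Fin n) K t) ⊓ Submodule.restrictScalars K Jid).map ν) :=
    (Submodule.equivMapOfInjective ν hinj _).finrank_eq
  haveI : FiniteDimensional K
      (((homogeneousSubmodule (Fin n) K (t + 1)) ⊓ Submodule.restrictScalars K Jid) ⊓ M : Submodule K (MvPolynomial (Fin n) K)) :=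
    Submodule.finiteDimensional_of_le (le_trans inf_le_left inf_le_left)
  have hmono := Submodule.finrank_mono claim2
  rw [← e2] at hmono
  omega

lemma HF_natCast (A : Ideal (MvPolynomial (Fin n) K)) (t : ℕ) :
    HF A (t : ℤ) = Module.finrank K (homogeneousSubmodule (Fin n) K t)
      - Module.finrank K (homogeneousSubmodule (Fin n) K t ⊓ Submodule.restrictScalars K A :
        Submodule K (MvPolynomial (Fin n) K)) := by
  simp [HF]

lemma HF_neg (A : Ideal (MvPolynomial (Fin n) K)) {t : ℤ} (ht : t < 0) : HF A t = 0 := by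
  rw [HF, if_neg (by omega)]

lemma full_of_HF_eq_zero (A : Ideal (MvPolynomial (Fin n) K)) (t : ℕ)
    (h : HF A (t : ℤ) = 0) :
    ∀ f ∈ homogeneousSubmodule (Fin n) K t, f ∈ A := by
  rw [HF_natCast] at h
  haveI : FiniteDimensional K (homogeneousSubmodule (Fin n) K t ⊓ Submodule.restrictScalars K A :
      Submodule K (MvPolynomial (Fin n) K)) :=
    Submodule.finiteDimensional_of_le inf_le_left
  have hle : (homogeneousSubmodule (Fin n) K t ⊓ Submodule.restrictScalars K A :
      Submodule K (MvPolynomial (Fin n) K)) ≤ homogeneousSubmodule (Fin n) K t := inf_le_left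
  have hge := Submodule.finrank_mono hle
  have heq := Submodule.eq_of_le_of_finrank_le hle (by omega)
  intro f hf
  rw [← heq] at hf
  exact hf.2

end Aux

theorem dH_decreasing {K : Type*} [Field K] [CharZero K] {n : ℕ} (hn : 3 ≤ n)
    (I : Ideal (MvPolynomial (Fin n) K)) (hhom : IsHomogeneousIdeal I)
    (hsat : IsSaturatedIdeal I)
    (hdim : ringKrullDim (MvPolynomial (Fin n) K ⧸ I) ≤ 2)
    (d : ℤ) (L₁ L₂ : MvPolynomial (Fin n) K)
    (hL₁ : L₁.IsHomogeneous 1) (hL₂ : L₂.IsHomogeneous 1)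
    (hreg : ∀ g : MvPolynomial (Fin n) K, L₁ * g ∈ I → g ∈ I)
    (hzero : HF (I ⊔ Ideal.span {L₁, L₂}) (d + 1) = 0) :
    dH I (d + 1) ≤ dH I d := by
  classical
  by_cases hI1 : (1 : MvPolynomial (Fin n) K) ∈ I
  · -- trivial case `I = ⊤`
    have hall : ∀ f : MvPolynomial (Fin n) K, f ∈ I := fun f => by
      simpa using I.mul_mem_left f hI1
    have hHF : ∀ s : ℤ, HF I s = 0 := by
      intro s
      rw [HF]
      split
      · rw [inf_eq_left.2 (fun f _ => hall f :
          homogeneousSubmodule (Fin n) K _ ≤ Submodule.restrictScalars K I), Nat.sub_self]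
      · rfl
    simp [dH, hHF]
  have hL₁0 : L₁ ≠ 0 := fun h => hI1 (hreg 1 (by rw [h, zero_mul]; exact zero_mem I))
  have hcJ := hc_sup_mem (Jid := I) hhom hL₁
  have hsup : I ⊔ Ideal.span {L₁, L₂} = (I ⊔ Ideal.span {L₁}) ⊔ Ideal.span {L₂} := by
    rw [sup_assoc, ← Ideal.span_union, Set.singleton_union]
  rcases lt_trichotomy d (-1) with hd | hd | hd
  · -- d ≤ -2 : everything vanishes
    have h1 : HF I (d + 1) = 0 := HF_neg I (by omega)
    have h2 : HF I d = 0 := HF_neg I (by omega)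
    have h3 : HF I (d - 1) = 0 := HF_neg I (by omega)
    rw [dH, dH, show d + 1 - 1 = d from by ring, h1, h2, h3]
  · -- d = -1
    subst hd
    have hzero' : HF (I ⊔ Ideal.span {L₁, L₂}) ((0 : ℕ) : ℤ) = 0 := by
      simpa using hzero
    have hfull := full_of_HF_eq_zero _ 0 hzero'
    have hSt0I : ∀ f ∈ homogeneousSubmodule (Fin n) K 0, f ∈ I := fun f hf =>
      decomp_zero hhom hL₁ hf (decomp_zero hcJ hL₂ hf (hsup ▸ hfull f hf))
    have hHF0 : HF I (0 : ℤ) = 0 := by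
      have h := HF_natCast I 0
      rw [inf_eq_left.2 (fun f hf => hSt0I f hf :
        homogeneousSubmodule (Fin n) K 0 ≤ Submodule.restrictScalars K I), Nat.sub_self] at h
      simpa using h
    have h1 : HF I (-1 : ℤ) = 0 := HF_neg I (by omega)
    have h2 : HF I (-2 : ℤ) = 0 := HF_neg I (by omega)
    rw [dH, dH]
    norm_num [hHF0, h1, h2]
  · -- d ≥ 0
    obtain ⟨t, rfl⟩ : ∃ t : ℕ, d = (t : ℤ) := ⟨d.toNat, (Int.toNat_of_nonneg (by omega)).symm⟩
    set J : Ideal (MvPolynomial (Fin n) K) := I ⊔ Ideal.span {L₁} with hJdef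
    set a : ℕ → ℕ := fun k => Module.finrank K (homogeneousSubmodule (Fin n) K k) with ha
    set b : ℕ → ℕ := fun k => Module.finrank K
      (homogeneousSubmodule (Fin n) K k ⊓ Submodule.restrictScalars K I :
        Submodule K (MvPolynomial (Fin n) K)) with hb
    set c : ℕ → ℕ := fun k => Module.finrank K
      (homogeneousSubmodule (Fin n) K k ⊓ Submodule.restrictScalars K J :
        Submodule K (MvPolynomial (Fin n) K)) with hc
    haveI : ∀ k (A : Ideal (MvPolynomial (Fin n) K)), FiniteDimensional K
        (homogeneousSubmodule (Fin n) K k ⊓ Submodule.restrictScalars K A :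
          Submodule K (MvPolynomial (Fin n) K)) :=
      fun k A => Submodule.finiteDimensional_of_le inf_le_left
    have hba : ∀ k, b k ≤ c k := fun k => Submodule.finrank_mono
      (inf_le_inf_left _ (fun x hx => (Ideal.mem_sup_left hx :
        x ∈ Submodule.restrictScalars K J)))
    have hca : ∀ k, c k ≤ a k := fun k => Submodule.finrank_mono inf_le_left
    -- the two dimension identities from regularity of L₁
    have hA : ∀ k : ℕ, c (k + 1) + b k = b (k + 1) + a k := fun k =>
      step_eq hhom hL₁ hL₁0 hreg k
    have hA0 : c 0 = b 0 := by
      simp only [hc, hb, hJdef]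
      rw [step_zero hhom hL₁]
    -- the surjectivity inequality from hzero
    have hzero' : HF (I ⊔ Ideal.span {L₁, L₂}) ((t + 1 : ℕ) : ℤ) = 0 := by
      rw [show ((t + 1 : ℕ) : ℤ) = (t : ℤ) + 1 from by push_cast; ring]
      exact hzero
    have hfull : ∀ f ∈ homogeneousSubmodule (Fin n) K (t + 1), f ∈ J ⊔ Ideal.span {L₂} :=
      fun f hf => hsup ▸ full_of_HF_eq_zero _ (t + 1) hzero' f hf
    have hB : a (t + 1) + c t ≤ a t + c (t + 1) := step_le hcJ hL₂ t hfull
    -- Hilbert function values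
    have hHF : ∀ k : ℕ, HF I ((k : ℕ) : ℤ) = a k - b k := fun k => HF_natCast I k
    rw [dH, dH]
    rw [show (t : ℤ) + 1 = ((t + 1 : ℕ) : ℤ) from by push_cast; ring,
      show ((t + 1 : ℕ) : ℤ) - 1 = ((t : ℕ) : ℤ) from by push_cast; ring]
    cases t with
    | zero =>
        have hneg : HF I (((0 : ℕ) : ℤ) - 1) = 0 := HF_neg I (by norm_num)
        rw [hHF 1, hHF 0, hneg]
        have h1 : c 1 + b 0 = b 1 + a 0 := hA 0
        have h2 : b 0 ≤ c 0 := hba 0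
        have h3 : b 1 ≤ c 1 := hba 1
        have h4 : c 0 ≤ a 0 := hca 0
        have h5 : c 1 ≤ a 1 := hca 1
        have hB' : a 1 + c 0 ≤ a 0 + c 1 := hB
        omega
    | succ s =>
        have hs : ((s + 1 : ℕ) : ℤ) - 1 = ((s : ℕ) : ℤ) := by push_cast; ring
        rw [hHF (s + 2), hHF (s + 1), hs, hHF s]
        have h1 : c (s + 2) + b (s + 1) = b (s + 2) + a (s + 1) := hA (s + 1)
        have h1' : c (s + 1) + b s = b (s + 1) + a s := hA s
        have h2 : b s ≤ c s := hba s
        have h3 : b (s + 1) ≤ c (s + 1) := hba (s + 1)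
        have h4 : b (s + 2) ≤ c (s + 2) := hba (s + 2)
        have h5 : c s ≤ a s := hca s
        have h6 : c (s + 1) ≤ a (s + 1) := hca (s + 1)
        have h7 : c (s + 2) ≤ a (s + 2) := hca (s + 2)
        have hB' : a (s + 2) + c (s + 1) ≤ a (s + 1) + c (s + 2) := hB
        omega

end Paper
end
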